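/- Let n ≥ 1, k ≥ 0 be integers, d ≥ 2 even, r ∈ ℝ and m > 0 be such that (n+k)/d + r > 0. Let α ∈ ℕⁿ be a multi-index with |α| = k and let g be a nonnegative homogeneous polynomial of degree d on ℝⁿ such that x ↦ x^α is integrable on G₁(g) = {x : g(x) ≤ 1}. Then ∫_{ℝⁿ} x^α g(x)^r exp(−g(x)^{1/m}) dx = ((n+k)/d)·m·Γ(m((n+k)/d + r))·∫_{G₁(g)} x^α dx. In particular, ∫_{ℝⁿ} g(x)·exp(−g(x)) dx = (n/d)·Γ(n/d + 1)·|G₁(g)| whenever |G₁(g)| < +∞. -/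

import Mathlib

open MeasureTheory

noncomputable section

/-- `G₁(g) = {x ∈ ℝⁿ : g(x) ≤ 1}`, the sublevel set of a polynomial at level 1. -/
def G1 {n : ℕ} (g : MvPolynomial (Fin n) ℝ) : Set (Fin n → ℝ) :=
  {x | MvPolynomial.eval x g ≤ 1}

open Real Set Pointwise
open scoped ENNReal NNReal

lemma eval_smul_homog {n d : ℕ} {g : MvPolynomial (Fin n) ℝ} (hg : g.IsHomogeneous d)
    (t : ℝ) (x : Fin n → ℝ) :
    MvPolynomial.eval (t • x) g = t ^ d * MvPolynomial.eval x g := by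
  rw [MvPolynomial.eval_eq', MvPolynomial.eval_eq', Finset.mul_sum]
  refine Finset.sum_congr rfl fun s hs => ?_
  have hdeg : ∑ i, s i = d := by
    have h1 : s.degree = d := by
      rw [Finsupp.degree_eq_weight_one]
      exact hg (MvPolynomial.mem_support_iff.mp hs)
    rw [← h1]
    unfold Finsupp.degree
    exact (Finset.sum_subset (Finset.subset_univ _)
      (fun i _ hi => Finsupp.notMem_support_iff.mp hi)).symm
  have : ∏ i, (t • x) i ^ s i = t ^ d * ∏ i, x i ^ s i := by
    simp_rw [Pi.smul_apply, smul_eq_mul, mul_pow]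
    rw [Finset.prod_mul_distrib, Finset.prod_pow_eq_pow_sum, hdeg]
  rw [this]; ring

lemma prod_pow_smul {n : ℕ} (α : Fin n →₀ ℕ) (t : ℝ) (x : Fin n → ℝ) :
    ∏ i, (t • x) i ^ α i = t ^ (∑ i, α i) * ∏ i, x i ^ α i := by
  simp_rw [Pi.smul_apply, smul_eq_mul, mul_pow]
  rw [Finset.prod_mul_distrib, Finset.prod_pow_eq_pow_sum]

lemma smul_sublevel {n d : ℕ} {g : MvPolynomial (Fin n) ℝ} (hg : g.IsHomogeneous d)
    {t : ℝ} (ht : 0 < t) (u : ℝ) :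
    t • {x : Fin n → ℝ | MvPolynomial.eval x g < u}
      = {x : Fin n → ℝ | MvPolynomial.eval x g < t ^ d * u} := by
  ext x
  rw [Set.mem_smul_set_iff_inv_smul_mem₀ ht.ne']
  simp only [Set.mem_setOf_eq, eval_smul_homog hg, inv_pow]
  rw [inv_mul_lt_iff₀ (by positivity)]

lemma smul_level {n d : ℕ} {g : MvPolynomial (Fin n) ℝ} (hg : g.IsHomogeneous d)
    {t : ℝ} (ht : 0 < t) (u : ℝ) :
    t • {x : Fin n → ℝ | MvPolynomial.eval x g = u}
      = {x : Fin n → ℝ | MvPolynomial.eval x g = t ^ d * u} := by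
  ext x
  rw [Set.mem_smul_set_iff_inv_smul_mem₀ ht.ne']
  simp only [Set.mem_setOf_eq, eval_smul_homog hg, inv_pow]
  rw [inv_mul_eq_iff_eq_mul₀ (by positivity)]

lemma int_aux {m b : ℝ} (hm : 0 < m) (hb : -1 < b) :
    IntegrableOn (fun u : ℝ => u ^ b * Real.exp (-u ^ (1/m))) (Set.Ioi 0) := by
  have hm' : (1:ℝ)/m ≠ 0 := by positivity
  have hpos : 0 < m * (b + 1) := by nlinarith
  have hint : IntegrableOn (fun y : ℝ => y ^ (m * (b+1) - 1) * Real.exp (-y)) (Set.Ioi 0) := by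
    refine (Real.GammaIntegral_convergent hpos).congr_fun (fun y _ => ?_) measurableSet_Ioi
    ring
  have h := (integrableOn_Ioi_comp_rpow_iff'
      (fun y : ℝ => y ^ (m * (b+1) - 1) * Real.exp (-y)) hm').mpr hint
  refine h.congr_fun (fun u hu => ?_) measurableSet_Ioi
  have hu0 : (0:ℝ) < u := hu
  have h1 : (u ^ ((1:ℝ)/m)) ^ (m * (b+1) - 1) = u ^ ((1/m) * (m * (b+1) - 1)) := by
    rw [← Real.rpow_mul hu0.le]
  dsimp only
  rw [smul_eq_mul, h1, ← mul_assoc, ← Real.rpow_add hu0]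
  congr 2
  field_simp
  ring

lemma w_meas {m r : ℝ} : Measurable (fun u : ℝ =>
    (1/m * u ^ (r + 1/m - 1) - r * u ^ (r - 1)) * Real.exp (-u ^ (1/m))) := by
  fun_prop

lemma int_aux2 {m c s : ℝ} (hm : 0 < m) (hs : 0 < s) :
    IntegrableOn (fun u : ℝ => u ^ c * Real.exp (-u ^ (1/m))) (Set.Ioi s) := by
  set c' : ℝ := max c 0 with hc'
  have hcc : c - c' ≤ 0 := by simp [hc']
  refine Integrable.mono'
    (g := fun u : ℝ => s ^ (c - c') * (u ^ c' * Real.exp (-u ^ (1/m)))) ?_ ?_ ?_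
  · exact (((int_aux hm (lt_of_lt_of_le neg_one_lt_zero (le_max_right c 0))).mono_set
      (Set.Ioi_subset_Ioi hs.le)).const_mul _)
  · exact (by fun_prop : Measurable fun u : ℝ =>
      u ^ c * Real.exp (-u ^ (1/m))).aestronglyMeasurable
  · filter_upwards [ae_restrict_mem measurableSet_Ioi] with u hu
    have hu0 : 0 < u := lt_trans hs hu
    have h1 : u ^ c = u ^ (c - c') * u ^ c' := by rw [← Real.rpow_add hu0]; ring_nf
    have h2 : u ^ (c - c') ≤ s ^ (c - c') :=
      Real.rpow_le_rpow_of_nonpos hs (le_of_lt hu) hcc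
    have h3 : 0 ≤ Real.exp (-u ^ (1/m)) := (Real.exp_pos _).le
    rw [Real.norm_eq_abs, abs_of_nonneg (by positivity)]
    calc u ^ c * Real.exp (-u ^ (1/m)) = u ^ (c-c') * (u ^ c' * Real.exp (-u ^ (1/m))) := by
          rw [h1]; ring
      _ ≤ s ^ (c - c') * (u ^ c' * Real.exp (-u ^ (1/m))) := by
          apply mul_le_mul_of_nonneg_right h2 (by positivity)

lemma gamma_int {m a : ℝ} (hm : 0 < m) (ha : 0 < a) :
    ∫ u in Set.Ioi (0:ℝ), u ^ (a - 1) * Real.exp (-u ^ (1/m)) = m * Real.Gamma (m * a) := by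
  rw [integral_rpow_mul_exp_neg_rpow (by positivity) (by linarith)]
  rw [one_div_one_div]
  congr 1
  field_simp
  ring

lemma psi_eq {m r s : ℝ} (hm : 0 < m) (hs : 0 < s) :
    ∫ u in Set.Ioi s, (1/m * u ^ (r + 1/m - 1) - r * u ^ (r - 1)) * Real.exp (-u ^ (1/m))
      = s ^ r * Real.exp (-s ^ (1/m)) := by
  have hderiv : ∀ u ∈ Set.Ici s, HasDerivAt (fun u : ℝ => -(u ^ r * Real.exp (-u ^ (1/m))))
      ((1/m * u ^ (r + 1/m - 1) - r * u ^ (r - 1)) * Real.exp (-u ^ (1/m))) u := by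
    intro u hu
    have hu0 : 0 < u := lt_of_lt_of_le hs hu
    have h1 : HasDerivAt (fun u : ℝ => u ^ r) (r * u ^ (r - 1)) u :=
      Real.hasDerivAt_rpow_const (Or.inl hu0.ne')
    have h2 : HasDerivAt (fun u : ℝ => u ^ ((1:ℝ)/m)) (1/m * u ^ (1/m - 1)) u :=
      Real.hasDerivAt_rpow_const (Or.inl hu0.ne')
    have h3 := (h2.neg).exp
    have h4 := (h1.mul h3).neg
    refine h4.congr_deriv (Eq.symm ?_)
    have e1 : u ^ r * u ^ ((1:ℝ)/m - 1) = u ^ (r + 1/m - 1) := by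
      rw [← Real.rpow_add hu0]; ring_nf
    calc (1/m * u ^ (r + 1/m - 1) - r * u ^ (r - 1)) * Real.exp (-u ^ (1/m))
        = -(r * u ^ (r-1) * Real.exp (-u ^ ((1:ℝ)/m))
            + (u ^ r * u ^ ((1:ℝ)/m - 1)) * (Real.exp (-u ^ ((1:ℝ)/m)) * (-(1/m)))) := by
          rw [e1]; ring
      _ = -(r * u ^ (r-1) * Real.exp (-u ^ ((1:ℝ)/m))
            + u ^ r * (Real.exp (-u ^ ((1:ℝ)/m)) * -(1/m * u ^ ((1:ℝ)/m - 1)))) := by ring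
  have hint : IntegrableOn (fun u : ℝ =>
      (1/m * u ^ (r + 1/m - 1) - r * u ^ (r - 1)) * Real.exp (-u ^ (1/m))) (Set.Ioi s) := by
    have h5 : IntegrableOn (fun u : ℝ => 1/m * (u ^ (r + 1/m - 1) * Real.exp (-u ^ (1/m)))
        - r * (u ^ (r - 1) * Real.exp (-u ^ (1/m)))) (Set.Ioi s) :=
      ((int_aux2 (c := r + 1/m - 1) hm hs).const_mul (1/m)).sub
        ((int_aux2 (c := r - 1) hm hs).const_mul r)
    refine h5.congr_fun (fun u _ => ?_) measurableSet_Ioi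
    ring
  have htend : Filter.Tendsto (fun u : ℝ => -(u ^ r * Real.exp (-u ^ (1/m))))
      Filter.atTop (nhds 0) := by
    have t1 := tendsto_rpow_mul_exp_neg_mul_atTop_nhds_zero (m * r) 1 one_pos
    have t2 : Filter.Tendsto (fun u : ℝ => u ^ ((1:ℝ)/m)) Filter.atTop Filter.atTop :=
      tendsto_rpow_atTop (by positivity)
    have t3 := t1.comp t2
    have t4 : Filter.Tendsto (fun u : ℝ => u ^ r * Real.exp (-u ^ (1/m)))
        Filter.atTop (nhds 0) := by
      refine t3.congr' ?_
      filter_upwards [Filter.eventually_gt_atTop (0:ℝ)] with u hu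
      simp only [Function.comp_apply]
      rw [← Real.rpow_mul hu.le]
      have : (1:ℝ)/m * (m * r) = r := by field_simp
      rw [this, neg_one_mul]
    simpa using t4.neg
  have := integral_Ioi_of_hasDerivAt_of_tendsto' hderiv hint htend
  rw [this]; ring

def wA (m r : ℝ) (u : ℝ) : ℝ :=
  (1/m * u ^ (r + 1/m - 1) - r * u ^ (r - 1)) * Real.exp (-u ^ (1/m))

lemma wA_meas (m r : ℝ) : Measurable (wA m r) := by
  unfold wA; fun_prop

lemma psi_eqA {m r s : ℝ} (hm : 0 < m) (hs : 0 < s) :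
    ∫ u in Set.Ioi s, wA m r u = s ^ r * Real.exp (-s ^ (1/m)) := psi_eq hm hs

lemma wA_bound (m r : ℝ) (hm : 0 < m) {v : ℝ} (hv : 0 < v) :
    |wA m r v| ≤ 1/m * v ^ (r + 1/m - 1) * Real.exp (-v ^ (1/m))
      + |r| * v ^ (r - 1) * Real.exp (-v ^ (1/m)) := by
  unfold wA
  rw [abs_mul, abs_of_nonneg (Real.exp_pos _).le]
  have h1 : |1/m * v ^ (r + 1/m - 1) - r * v ^ (r - 1)|
      ≤ 1/m * v ^ (r + 1/m - 1) + |r| * v ^ (r - 1) := by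
    have h2 : |1/m * v ^ (r + 1/m - 1) - r * v ^ (r - 1)|
        ≤ |1/m * v ^ (r + 1/m - 1)| + |r * v ^ (r - 1)| := by
      rw [sub_eq_add_neg]
      exact (abs_add_le _ _).trans_eq (by rw [abs_neg])
    rw [abs_mul, abs_of_nonneg (by positivity : (0:ℝ) ≤ 1/m),
      abs_of_nonneg (Real.rpow_nonneg hv.le _), abs_mul,
      abs_of_nonneg (Real.rpow_nonneg hv.le _)] at h2
    exact h2
  calc |1/m * v ^ (r + 1/m - 1) - r * v ^ (r - 1)| * Real.exp (-v ^ (1/m))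
      ≤ (1/m * v ^ (r + 1/m - 1) + |r| * v ^ (r - 1)) * Real.exp (-v ^ (1/m)) :=
        mul_le_mul_of_nonneg_right h1 (Real.exp_pos _).le
    _ = _ := by ring

set_option maxHeartbeats 2000000 in
lemma key (n k d : ℕ) (hn : 1 ≤ n) (hd2 : 2 ≤ d)
    (r m : ℝ) (hm : 0 < m) (hpos : ((n : ℝ) + k) / d + r > 0)
    (α : Fin n →₀ ℕ) (hα : (∑ i, α i) = k)
    (g : MvPolynomial (Fin n) ℝ) (hg : g.IsHomogeneous d)
    (hg_nonneg : ∀ x, 0 ≤ MvPolynomial.eval x g)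
    (hint : IntegrableOn (fun x : Fin n → ℝ => ∏ i, x i ^ α i) (G1 g)) :
    (∫ x, (∏ i, x i ^ α i) * MvPolynomial.eval x g ^ r *
        Real.exp (-(MvPolynomial.eval x g ^ (1 / m)))) =
      ((n : ℝ) + k) / d * m * Real.Gamma (m * (((n : ℝ) + k) / d + r)) *
        ∫ x in G1 g, ∏ i, x i ^ α i := by
  have hd0 : 0 < d := by omega
  have hdR : (0:ℝ) < d := by exact_mod_cast hd0
  set q : ℝ := ((n : ℝ) + k) / d with hq
  have hq0 : 0 < q := by positivity
  have hqr : 0 < q + r := hpos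
  -- continuity and measurability
  have contg : Continuous fun x : Fin n → ℝ => MvPolynomial.eval x g :=
    MvPolynomial.continuous_eval g
  have contP : Continuous fun x : Fin n → ℝ => ∏ i, x i ^ α i := by
    apply continuous_finset_prod
    exact fun i _ => (continuous_apply i).pow (α i)
  have hPm : Measurable fun x : Fin n → ℝ => ∏ i, x i ^ α i := contP.measurable
  have hGmeas : ∀ u : ℝ, MeasurableSet {x : Fin n → ℝ | MvPolynomial.eval x g < u} :=
    fun u => (isOpen_lt contg continuous_const).measurableSet
  have hG1meas : MeasurableSet (G1 g) := (isClosed_le contg continuous_const).measurableSet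
  have hlev : ∀ u : ℝ, MeasurableSet {x : Fin n → ℝ | MvPolynomial.eval x g = u} :=
    fun u => (isClosed_eq contg continuous_const).measurableSet
  -- scaling of sublevel sets
  have hsetu : ∀ u : ℝ, 0 < u → (u ^ ((d:ℝ)⁻¹)) • {x : Fin n → ℝ | MvPolynomial.eval x g < 1}
      = {x : Fin n → ℝ | MvPolynomial.eval x g < u} := by
    intro u hu
    rw [smul_sublevel hg (Real.rpow_pos_of_pos hu _)]
    congr 1
    rw [mul_one, ← Real.rpow_natCast (u ^ ((d:ℝ)⁻¹)) d, ← Real.rpow_mul hu.le,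
      inv_mul_cancel₀ (ne_of_gt hdR), Real.rpow_one]
  -- scaling of integrals
  have hscale : ∀ f : (Fin n → ℝ) → ℝ, (∀ t : ℝ, 0 < t → ∀ x, f (t • x) = t ^ k * f x) →
      ∀ u : ℝ, 0 < u →
      ∫ x in {x : Fin n → ℝ | MvPolynomial.eval x g < u}, f x
        = u ^ q * ∫ x in {x : Fin n → ℝ | MvPolynomial.eval x g < 1}, f x := by
    intro f hf u hu
    have hR0 : 0 < u ^ ((d:ℝ)⁻¹) := Real.rpow_pos_of_pos hu _
    have h := MeasureTheory.Measure.setIntegral_comp_smul_of_pos volume f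
      {x : Fin n → ℝ | MvPolynomial.eval x g < 1} hR0
    rw [hsetu u hu, Module.finrank_fin_fun, smul_eq_mul] at h
    have h2 : ∫ x in {x : Fin n → ℝ | MvPolynomial.eval x g < 1}, f ((u ^ ((d:ℝ)⁻¹)) • x)
        = (u ^ ((d:ℝ)⁻¹)) ^ k * ∫ x in {x : Fin n → ℝ | MvPolynomial.eval x g < 1}, f x := by
      rw [← integral_const_mul]
      exact setIntegral_congr_fun (hGmeas 1) fun x _ => hf _ hR0 x
    rw [h2] at h
    have hpow : (u ^ ((d:ℝ)⁻¹)) ^ (n + k : ℕ) = u ^ q := by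
      rw [← Real.rpow_natCast (u ^ ((d:ℝ)⁻¹)) (n + k), ← Real.rpow_mul hu.le]
      congr 1
      rw [hq]
      push_cast
      field_simp
    have hne : ((u ^ ((d:ℝ)⁻¹)) ^ (n:ℕ)) ≠ 0 := by positivity
    rw [← hpow, pow_add]
    field_simp at h ⊢
    linarith [h]
  -- integrability on sublevel sets
  have hintlt1 : IntegrableOn (fun x : Fin n → ℝ => ∏ i, x i ^ α i)
      {x : Fin n → ℝ | MvPolynomial.eval x g < 1} :=
    hint.mono_set (fun x hx => show MvPolynomial.eval x g ≤ 1 from le_of_lt hx)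
  have hfP : ∀ t : ℝ, 0 < t → ∀ x : Fin n → ℝ,
      (∏ i, (t • x) i ^ α i) = t ^ k * ∏ i, x i ^ α i := by
    intro t ht x
    rw [prod_pow_smul, hα]
  have hintu : ∀ u : ℝ, 0 < u → IntegrableOn (fun x : Fin n → ℝ => ∏ i, x i ^ α i)
      {x : Fin n → ℝ | MvPolynomial.eval x g < u} := by
    intro u hu
    have hR0 : 0 < u ^ ((d:ℝ)⁻¹) := Real.rpow_pos_of_pos hu _
    rw [← integrable_indicator_iff (hGmeas u)]
    rw [← integrable_comp_smul_iff volume _ (ne_of_gt hR0)]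
    have heq : (fun x : Fin n → ℝ =>
        Set.indicator {x : Fin n → ℝ | MvPolynomial.eval x g < u}
          (fun x => ∏ i, x i ^ α i) ((u ^ ((d:ℝ)⁻¹)) • x))
        = fun x : Fin n → ℝ => (u ^ ((d:ℝ)⁻¹)) ^ k *
            Set.indicator {x : Fin n → ℝ | MvPolynomial.eval x g < 1}
              (fun x => ∏ i, x i ^ α i) x := by
      funext x
      by_cases hx : x ∈ {x : Fin n → ℝ | MvPolynomial.eval x g < 1}
      · have hmem : (u ^ ((d:ℝ)⁻¹)) • x ∈ {x : Fin n → ℝ | MvPolynomial.eval x g < u} := by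
          rw [← hsetu u hu]
          exact Set.smul_mem_smul_set hx
        rw [Set.indicator_of_mem hmem, Set.indicator_of_mem hx, hfP _ hR0]
      · have hmem : (u ^ ((d:ℝ)⁻¹)) • x ∉ {x : Fin n → ℝ | MvPolynomial.eval x g < u} := by
          rw [← hsetu u hu]
          intro hc
          exact hx ((Set.smul_mem_smul_set_iff₀ (ne_of_gt hR0) _ x).mp hc)
        rw [Set.indicator_of_notMem hmem, Set.indicator_of_notMem hx, mul_zero]
    rw [heq]
    exact (((integrable_indicator_iff (hGmeas 1)).mpr hintlt1).const_mul _)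
  -- the weighted measure ν
  set W : (Fin n → ℝ) → ℝ≥0∞ := fun x => ENNReal.ofReal (abs (∏ i, x i ^ α i)) with hW
  have hWm : Measurable W := (hPm.abs).ennreal_ofReal
  set ν : Measure (Fin n → ℝ) := volume.withDensity W with hν
  have hνapp : ∀ s : Set (Fin n → ℝ), MeasurableSet s → ν s = ∫⁻ x in s, W x := by
    intro s hs
    rw [hν, withDensity_apply _ hs]
  have hνfin : ν (G1 g) < ⊤ := by
    rw [hνapp _ hG1meas]
    have h2 := hint.2
    rw [HasFiniteIntegral] at h2
    refine lt_of_le_of_lt (le_of_eq ?_) h2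
    refine lintegral_congr fun x => ?_
    simp [hW, Real.enorm_eq_ofReal_abs]
  have hlint_smul : ∀ (f : (Fin n → ℝ) → ℝ≥0∞), Measurable f → ∀ t : ℝ, 0 < t →
      ∫⁻ x, f (t • x) = ENNReal.ofReal ((t ^ (n:ℕ))⁻¹) * ∫⁻ x, f x := by
    intro f hf t ht
    rw [← lintegral_map hf (measurable_const_smul t),
      MeasureTheory.Measure.map_addHaar_smul volume (ne_of_gt ht), lintegral_smul_measure,
      Module.finrank_fin_fun, abs_of_nonneg (by positivity), smul_eq_mul]
  have hνsmul : ∀ s : Set (Fin n → ℝ), MeasurableSet s → ∀ t : ℝ, 0 < t →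
      ν (t • s) = ENNReal.ofReal (t ^ (n + k : ℕ)) * ν s := by
    intro s hs t ht
    have hms : MeasurableSet (t • s) := hs.const_smul₀ t
    rw [hνapp _ hms, hνapp _ hs, ← lintegral_indicator hms W, ← lintegral_indicator hs W]
    have h := hlint_smul (Set.indicator (t • s) W) (hWm.indicator hms) t ht
    have heq : (fun x => Set.indicator (t • s) W (t • x))
        = fun x => ENNReal.ofReal (t ^ (k:ℕ)) * Set.indicator s W x := by
      funext x
      by_cases hx : x ∈ s
      · rw [Set.indicator_of_mem (Set.smul_mem_smul_set hx), Set.indicator_of_mem hx, hW]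
        simp only []
        rw [hfP t ht x, abs_mul, ENNReal.ofReal_mul (by positivity), abs_of_nonneg (by positivity)]
      · rw [Set.indicator_of_notMem
          (fun hc => hx ((Set.smul_mem_smul_set_iff₀ (ne_of_gt ht) _ x).mp hc)),
          Set.indicator_of_notMem hx, mul_zero]
    rw [heq, lintegral_const_mul _ (hWm.indicator hs)] at h
    have hne : ENNReal.ofReal ((t ^ (n:ℕ))⁻¹) ≠ 0 := by
      simp [ENNReal.ofReal_eq_zero]
      positivity
    have hnetop : ENNReal.ofReal ((t ^ (n:ℕ))⁻¹) ≠ ⊤ := ENNReal.ofReal_ne_top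
    calc ∫⁻ x, Set.indicator (t • s) W x
        = (ENNReal.ofReal ((t ^ (n:ℕ))⁻¹))⁻¹ *
            (ENNReal.ofReal ((t ^ (n:ℕ))⁻¹) * ∫⁻ x, Set.indicator (t • s) W x) := by
          rw [← mul_assoc, ENNReal.inv_mul_cancel hne hnetop, one_mul]
      _ = (ENNReal.ofReal ((t ^ (n:ℕ))⁻¹))⁻¹ *
            (ENNReal.ofReal (t ^ (k:ℕ)) * ∫⁻ x, Set.indicator s W x) := by rw [← h]
      _ = ENNReal.ofReal (t ^ (n + k:ℕ)) * ∫⁻ x, Set.indicator s W x := by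
          rw [← ENNReal.ofReal_inv_of_pos (by positivity), inv_inv, ← mul_assoc,
            ← ENNReal.ofReal_mul (by positivity), ← pow_add]
  -- from ν-null to volume-null
  have hWzero : ∀ s : Set (Fin n → ℝ), ν s = 0 →
      volume ({x | (∏ i, x i ^ α i) ≠ 0} ∩ s) = 0 := by
    intro s h0
    rw [hν] at h0
    have h1 := (withDensity_apply_eq_zero hWm).mp h0
    refine measure_mono_null ?_ h1
    intro x hx
    refine ⟨?_, hx.2⟩
    simp only [hW, Set.mem_setOf_eq, ne_eq, ENNReal.ofReal_eq_zero, not_le, abs_pos]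
    exact hx.1
  -- the zero level set
  have hnull0 : volume ({x | (∏ i, x i ^ α i) ≠ 0} ∩
      {x : Fin n → ℝ | MvPolynomial.eval x g = 0}) = 0 := by
    apply hWzero
    have hZsub : {x : Fin n → ℝ | MvPolynomial.eval x g = 0} ⊆ G1 g :=
      fun x hx => show MvPolynomial.eval x g ≤ 1 from hx.le.trans zero_le_one
    have hfin : ν {x : Fin n → ℝ | MvPolynomial.eval x g = 0} < ⊤ :=
      lt_of_le_of_lt (measure_mono hZsub) hνfin
    have hsm : (2:ℝ) • {x : Fin n → ℝ | MvPolynomial.eval x g = 0}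
        = {x : Fin n → ℝ | MvPolynomial.eval x g = 0} := by
      rw [smul_level hg (by norm_num : (0:ℝ) < 2) 0, mul_zero]
    have h2 := hνsmul _ (hlev 0) 2 (by norm_num)
    rw [hsm] at h2
    by_contra hne
    have h1lt : (1:ℝ≥0∞) < ENNReal.ofReal ((2:ℝ) ^ (n + k : ℕ)) := by
      rw [← ENNReal.ofReal_one, ENNReal.ofReal_lt_ofReal_iff (by positivity)]
      exact one_lt_pow₀ (by norm_num) (by omega)
    have hlt : ν {x : Fin n → ℝ | MvPolynomial.eval x g = 0}
        < ENNReal.ofReal ((2:ℝ) ^ (n + k : ℕ)) * ν {x : Fin n → ℝ | MvPolynomial.eval x g = 0} := by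
      conv_lhs => rw [← one_mul (ν {x : Fin n → ℝ | MvPolynomial.eval x g = 0})]
      exact ENNReal.mul_lt_mul_left hne (ne_of_lt hfin) h1lt
    rw [← h2] at hlt
    exact lt_irrefl _ hlt
  -- the level-one set
  have hnull1 : volume ({x | (∏ i, x i ^ α i) ≠ 0} ∩
      {x : Fin n → ℝ | MvPolynomial.eval x g = 1}) = 0 := by
    apply hWzero
    by_contra hne
    set t : ℕ → ℝ := fun j => 1 - 1/(j+2) with hT
    have ht0 : ∀ j, 0 < t j := by
      intro j
      have : 1/((j:ℝ)+2) < 1 := by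
        rw [div_lt_one (by positivity)]
        have : (0:ℝ) ≤ j := Nat.cast_nonneg j
        linarith
      simp only [hT]
      linarith
    have hthalf : ∀ j, (1:ℝ)/2 ≤ t j := by
      intro j
      have h2 : (2:ℝ) ≤ (j:ℝ)+2 := by
        have : (0:ℝ) ≤ j := Nat.cast_nonneg j
        linarith
      have := one_div_le_one_div_of_le (by norm_num : (0:ℝ) < 2) h2
      simp only [hT]
      linarith
    have ht1 : ∀ j, t j ≤ 1 := by
      intro j
      have : (0:ℝ) ≤ 1/((j:ℝ)+2) := by positivity
      simp only [hT]
      linarith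
    have htinj : Function.Injective t := by
      intro i j hij
      simp only [hT] at hij
      have h1 : 1/((i:ℝ)+2) = 1/((j:ℝ)+2) := by linarith
      have h2 : ((i:ℝ)+2) = ((j:ℝ)+2) := by
        rw [div_eq_div_iff (by positivity) (by positivity)] at h1
        linarith
      have : (i:ℝ) = j := by linarith
      exact_mod_cast this
    have hSlev : ∀ j, t j • {x : Fin n → ℝ | MvPolynomial.eval x g = 1}
        = {x : Fin n → ℝ | MvPolynomial.eval x g = t j ^ d} := by
      intro j
      rw [smul_level hg (ht0 j), mul_one]
    have hSmeas : ∀ j, MeasurableSet (t j • {x : Fin n → ℝ | MvPolynomial.eval x g = 1}) := by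
      intro j
      rw [hSlev j]
      exact hlev _
    have hdisj : Pairwise (Function.onFun Disjoint
        (fun j => t j • {x : Fin n → ℝ | MvPolynomial.eval x g = 1})) := by
      intro i j hij
      rw [Function.onFun, Set.disjoint_left]
      intro x hxi hxj
      rw [hSlev i] at hxi
      rw [hSlev j] at hxj
      have : t i ^ d = t j ^ d := by
        rw [← hxi, ← hxj]
      exact hij (htinj ((pow_left_inj₀ (ht0 i).le (ht0 j).le
        (by omega : d ≠ 0)).mp this))
    have hUsub : (⋃ j, t j • {x : Fin n → ℝ | MvPolynomial.eval x g = 1}) ⊆ G1 g := by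
      intro x hx
      obtain ⟨j, hj⟩ := Set.mem_iUnion.mp hx
      rw [hSlev j] at hj
      show MvPolynomial.eval x g ≤ 1
      rw [hj]
      exact pow_le_one₀ (ht0 j).le (ht1 j)
    have hU := measure_iUnion (μ := ν) hdisj hSmeas
    have hfin : ν (⋃ j, t j • {x : Fin n → ℝ | MvPolynomial.eval x g = 1}) < ⊤ :=
      lt_of_le_of_lt (measure_mono hUsub) hνfin
    have hteq : ∀ j, ν (t j • {x : Fin n → ℝ | MvPolynomial.eval x g = 1})
        = ENNReal.ofReal (t j ^ (n + k : ℕ)) * ν {x : Fin n → ℝ | MvPolynomial.eval x g = 1} :=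
      fun j => hνsmul _ (hlev 1) (t j) (ht0 j)
    set c : ℝ≥0∞ := ENNReal.ofReal (((1:ℝ)/2) ^ (n + k : ℕ))
        * ν {x : Fin n → ℝ | MvPolynomial.eval x g = 1} with hc
    have hcne : c ≠ 0 := by
      rw [hc]
      apply mul_ne_zero _ hne
      simp only [ne_eq, ENNReal.ofReal_eq_zero, not_le]
      positivity
    have hge : ∀ j, c ≤ ν (t j • {x : Fin n → ℝ | MvPolynomial.eval x g = 1}) := by
      intro j
      rw [hteq j, hc]
      refine mul_le_mul_of_nonneg_right ?_ (zero_le')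
      apply ENNReal.ofReal_le_ofReal
      exact pow_le_pow_left₀ (by norm_num) (hthalf j) _
    have htop : (∑' _ : ℕ, c) = ⊤ := ENNReal.tsum_const_eq_top_of_ne_zero hcne
    have : (⊤ : ℝ≥0∞) ≤ ν (⋃ j, t j • {x : Fin n → ℝ | MvPolynomial.eval x g = 1}) := by
      rw [hU, ← htop]
      exact ENNReal.tsum_le_tsum hge
    exact (lt_irrefl ⊤ (lt_of_le_of_lt this hfin)).elim
  -- a.e. facts
  have hae0 : ∀ᵐ x : Fin n → ℝ, (∏ i, x i ^ α i) = 0 ∨ 0 < MvPolynomial.eval x g := by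
    rw [ae_iff]
    refine measure_mono_null ?_ hnull0
    intro x hx
    simp only [Set.mem_setOf_eq, not_or, not_lt] at hx
    exact ⟨hx.1, le_antisymm hx.2 (hg_nonneg x)⟩
  have hc0 : ∫ x in G1 g, ∏ i, x i ^ α i
      = ∫ x in {x : Fin n → ℝ | MvPolynomial.eval x g < 1}, ∏ i, x i ^ α i := by
    have hsplit : G1 g = {x : Fin n → ℝ | MvPolynomial.eval x g < 1}
        ∪ {x : Fin n → ℝ | MvPolynomial.eval x g = 1} := by
      ext x
      simp only [G1, Set.mem_setOf_eq, Set.mem_union, le_iff_lt_or_eq]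
    have hdisj2 : Disjoint {x : Fin n → ℝ | MvPolynomial.eval x g < 1}
        {x : Fin n → ℝ | MvPolynomial.eval x g = 1} := by
      rw [Set.disjoint_left]
      intro x hx1 hx2
      exact absurd hx2 (ne_of_lt hx1)
    have hi2 : IntegrableOn (fun x : Fin n → ℝ => ∏ i, x i ^ α i)
        {x : Fin n → ℝ | MvPolynomial.eval x g = 1} :=
      hint.mono_set (fun x hx => show MvPolynomial.eval x g ≤ 1 from le_of_eq hx)
    rw [hsplit, setIntegral_union hdisj2 (hlev 1) hintlt1 hi2]
    have hz : ∫ x in {x : Fin n → ℝ | MvPolynomial.eval x g = 1}, ∏ i, x i ^ α i = 0 := by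
      apply integral_eq_zero_of_ae
      have h0 : ∀ᵐ (x : Fin n → ℝ) ∂volume.restrict
          {x : Fin n → ℝ | MvPolynomial.eval x g = 1}, (∏ i, x i ^ α i) = 0 := by
        rw [ae_restrict_iff' (hlev 1), ae_iff]
        refine measure_mono_null ?_ hnull1
        intro x hx
        simp only [Set.mem_setOf_eq, not_forall, Classical.not_imp] at hx
        exact ⟨hx.2, hx.1⟩
      exact h0
    rw [hz, add_zero]
  -- Fubini setup
  have h1m : (0:ℝ) < 1/m := by positivity
  have hw_meas : Measurable (wA m r) := wA_meas m r
  set S : Set ((Fin n → ℝ) × ℝ) := {z | MvPolynomial.eval z.1 g < z.2} with hSdef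
  have hSmeas : MeasurableSet S :=
    (isOpen_lt (contg.comp continuous_fst) continuous_snd).measurableSet
  set F : (Fin n → ℝ) × ℝ → ℝ :=
    S.indicator (fun z => (∏ i, z.1 i ^ α i) * wA m r z.2) with hFdef
  have hslice : ∀ (x : Fin n → ℝ) (u : ℝ), F (x, u)
      = Set.indicator (Set.Ioi (MvPolynomial.eval x g))
          (fun v => (∏ i, x i ^ α i) * wA m r v) u := by
    intro x u
    by_cases h : MvPolynomial.eval x g < u
    · rw [hFdef, Set.indicator_of_mem (show (x,u) ∈ S from h),
        Set.indicator_of_mem (Set.mem_Ioi.mpr h)]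
    · rw [hFdef, Set.indicator_of_notMem (show (x,u) ∉ S from h),
        Set.indicator_of_notMem (fun hc => h (Set.mem_Ioi.mp hc))]
  have hslice2 : ∀ u : ℝ, (fun x => F (x, u))
      = Set.indicator {x : Fin n → ℝ | MvPolynomial.eval x g < u}
          (fun x => (∏ i, x i ^ α i) * wA m r u) := by
    intro u
    funext x
    by_cases h : MvPolynomial.eval x g < u
    · rw [hFdef, Set.indicator_of_mem (show (x,u) ∈ S from h),
        Set.indicator_of_mem (show x ∈ {x : Fin n → ℝ | MvPolynomial.eval x g < u} from h)]
    · rw [hFdef, Set.indicator_of_notMem (show (x,u) ∉ S from h),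
        Set.indicator_of_notMem
          (show x ∉ {x : Fin n → ℝ | MvPolynomial.eval x g < u} from h)]
  have hFzero : ∀ u : ℝ, u ≤ 0 → ∀ x : Fin n → ℝ, F (x, u) = 0 := by
    intro u hu x
    rw [hslice]
    apply Set.indicator_of_notMem
    rw [Set.mem_Ioi, not_lt]
    exact hu.trans (hg_nonneg x)
  -- the absolute-value weight
  set C₀ : ℝ := ∫ x in {x : Fin n → ℝ | MvPolynomial.eval x g < 1}, |∏ i, x i ^ α i| with hC0def
  have hC0 : 0 ≤ C₀ := setIntegral_nonneg (hGmeas 1) (fun x _ => abs_nonneg _)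
  have hfPabs : ∀ t : ℝ, 0 < t → ∀ x : Fin n → ℝ,
      |∏ i, (t • x) i ^ α i| = t ^ k * |∏ i, x i ^ α i| := by
    intro t ht x
    rw [hfP t ht x, abs_mul, abs_of_nonneg (pow_nonneg ht.le k)]
  have habs_scale : ∀ u : ℝ, 0 < u →
      ∫ x in {x : Fin n → ℝ | MvPolynomial.eval x g < u}, |∏ i, x i ^ α i| = u ^ q * C₀ :=
    fun u hu => hscale _ hfPabs u hu
  have hnorm : ∀ u : ℝ, (∫ x, ‖F (x, u)‖)
      = Set.indicator (Set.Ioi (0:ℝ)) (fun v => |wA m r v| * (v ^ q * C₀)) u := by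
    intro u
    by_cases hu : 0 < u
    · rw [Set.indicator_of_mem (Set.mem_Ioi.mpr hu)]
      have h1 : (fun x => ‖F (x, u)‖)
          = Set.indicator {x : Fin n → ℝ | MvPolynomial.eval x g < u}
              (fun x => ‖(∏ i, x i ^ α i) * wA m r u‖) := by
        funext x
        rw [show F (x, u) = Set.indicator {x : Fin n → ℝ | MvPolynomial.eval x g < u}
            (fun x => (∏ i, x i ^ α i) * wA m r u) x from congrFun (hslice2 u) x,
          norm_indicator_eq_indicator_norm]
      rw [h1, integral_indicator (hGmeas u)]
      calc ∫ x in {x : Fin n → ℝ | MvPolynomial.eval x g < u}, ‖(∏ i, x i ^ α i) * wA m r u‖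
          = ∫ x in {x : Fin n → ℝ | MvPolynomial.eval x g < u}, |∏ i, x i ^ α i| * |wA m r u| := by
            refine setIntegral_congr_fun (hGmeas u) (fun x _ => ?_)
            rw [Real.norm_eq_abs, abs_mul]
        _ = (∫ x in {x : Fin n → ℝ | MvPolynomial.eval x g < u}, |∏ i, x i ^ α i|) * |wA m r u| :=
            integral_mul_const _ _
        _ = |wA m r u| * (u ^ q * C₀) := by rw [habs_scale u hu]; ring
    · rw [Set.indicator_of_notMem (by simpa using hu)]
      rw [show (fun x => ‖F (x, u)‖) = fun _ => (0:ℝ) from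
        funext (fun x => by rw [hFzero u (not_lt.mp hu) x, norm_zero]), integral_zero]
  have hFm : AEStronglyMeasurable F (volume.prod volume) := by
    rw [hFdef]
    exact (((hPm.comp measurable_fst).mul
      (hw_meas.comp measurable_snd)).indicator hSmeas).aestronglyMeasurable
  have hIntF : Integrable F (volume.prod volume) := by
    rw [integrable_prod_iff' hFm]
    constructor
    · refine Filter.Eventually.of_forall (fun u => ?_)
      by_cases hu : 0 < u
      · rw [hslice2 u, integrable_indicator_iff (hGmeas u)]
        exact (hintu u hu).mul_const _
      · rw [show (fun x => F (x, u)) = fun _ => (0:ℝ) from funext (hFzero u (not_lt.mp hu))]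
        exact integrable_zero _ _ _
    · rw [show (fun u => ∫ x, ‖F (x, u)‖)
        = Set.indicator (Set.Ioi (0:ℝ)) (fun v => |wA m r v| * (v ^ q * C₀)) from funext hnorm,
        integrable_indicator_iff measurableSet_Ioi]
      refine Integrable.mono'
        (g := fun v => (v ^ (q + r + 1/m - 1) * Real.exp (-v ^ (1/m))) * (1/m * C₀)
          + (v ^ (q + r - 1) * Real.exp (-v ^ (1/m))) * (|r| * C₀)) ?_ ?_ ?_
      · exact ((int_aux hm (by linarith : (-1:ℝ) < q + r + 1/m - 1)).mul_const _).add
          ((int_aux hm (by linarith : (-1:ℝ) < q + r - 1)).mul_const _)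
      · exact ((hw_meas.abs.mul (by fun_prop : Measurable fun v : ℝ => v ^ q * C₀))).aestronglyMeasurable
      · filter_upwards [ae_restrict_mem measurableSet_Ioi] with v hv
        have hv0 : (0:ℝ) < v := hv
        have e1 : v ^ (r + 1/m - 1) * v ^ q = v ^ (q + r + 1/m - 1) := by
          rw [← Real.rpow_add hv0]; ring_nf
        have e2 : v ^ (r - 1) * v ^ q = v ^ (q + r - 1) := by
          rw [← Real.rpow_add hv0]; ring_nf
        rw [Real.norm_eq_abs, abs_of_nonneg (by positivity)]
        calc |wA m r v| * (v ^ q * C₀)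
            ≤ (1/m * v ^ (r + 1/m - 1) * Real.exp (-v ^ (1/m))
                + |r| * v ^ (r - 1) * Real.exp (-v ^ (1/m))) * (v ^ q * C₀) :=
              mul_le_mul_of_nonneg_right (wA_bound m r hm hv0) (by positivity)
          _ = (v ^ (r + 1/m - 1) * v ^ q * Real.exp (-v ^ (1/m))) * (1/m * C₀)
              + (v ^ (r - 1) * v ^ q * Real.exp (-v ^ (1/m))) * (|r| * C₀) := by ring
          _ = _ := by rw [e1, e2]
  -- the chain of equalities
  have step1 : (∫ x, (∏ i, x i ^ α i) * MvPolynomial.eval x g ^ r *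
      Real.exp (-(MvPolynomial.eval x g ^ (1 / m)))) = ∫ x, ∫ u, F (x, u) := by
    refine integral_congr_ae ?_
    filter_upwards [hae0] with x hx
    have hinner : ∫ u, F (x, u)
        = (∏ i, x i ^ α i) * ∫ u in Set.Ioi (MvPolynomial.eval x g), wA m r u := by
      calc ∫ u, F (x, u)
          = ∫ u, Set.indicator (Set.Ioi (MvPolynomial.eval x g))
              (fun v => (∏ i, x i ^ α i) * wA m r v) u :=
            integral_congr_ae (Filter.Eventually.of_forall (fun u => hslice x u))
        _ = ∫ u in Set.Ioi (MvPolynomial.eval x g), (∏ i, x i ^ α i) * wA m r u :=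
            integral_indicator measurableSet_Ioi
        _ = (∏ i, x i ^ α i) * ∫ u in Set.Ioi (MvPolynomial.eval x g), wA m r u :=
            integral_const_mul _ _
    rw [hinner]
    rcases hx with h0 | hpos'
    · rw [h0]; ring
    · rw [psi_eqA hm hpos', mul_assoc]
  have step2 : ∫ x, ∫ u, F (x, u) = ∫ u, ∫ x, F (x, u) :=
    integral_integral_swap hIntF
  set c₀ : ℝ := ∫ x in {x : Fin n → ℝ | MvPolynomial.eval x g < 1}, ∏ i, x i ^ α i with hc0def
  have hx_int : ∀ u : ℝ, (∫ x, F (x, u))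
      = Set.indicator (Set.Ioi (0:ℝ)) (fun v => wA m r v * (v ^ q * c₀)) u := by
    intro u
    by_cases hu : 0 < u
    · rw [Set.indicator_of_mem (Set.mem_Ioi.mpr hu), hslice2 u, integral_indicator (hGmeas u)]
      calc ∫ x in {x : Fin n → ℝ | MvPolynomial.eval x g < u}, (∏ i, x i ^ α i) * wA m r u
          = (∫ x in {x : Fin n → ℝ | MvPolynomial.eval x g < u}, ∏ i, x i ^ α i) * wA m r u :=
            integral_mul_const _ _
        _ = wA m r u * (u ^ q * c₀) := by rw [hscale _ hfP u hu]; ring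
    · rw [Set.indicator_of_notMem (by simpa using hu),
        show (fun x => F (x, u)) = fun _ => (0:ℝ) from funext (hFzero u (not_lt.mp hu)),
        integral_zero]
  have step3 : ∫ u, ∫ x, F (x, u) = ∫ u in Set.Ioi (0:ℝ), wA m r u * (u ^ q * c₀) := by
    rw [show (fun u => ∫ x, F (x, u))
      = Set.indicator (Set.Ioi (0:ℝ)) (fun v => wA m r v * (v ^ q * c₀)) from funext hx_int,
      integral_indicator measurableSet_Ioi]
  have hJ : ∫ u in Set.Ioi (0:ℝ), wA m r u * u ^ q = m * q * Real.Gamma (m * (q + r)) := by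
    have hcong : ∀ u ∈ Set.Ioi (0:ℝ), wA m r u * u ^ q
        = 1/m * (u ^ ((q + r + 1/m) - 1) * Real.exp (-u ^ (1/m)))
          - r * (u ^ ((q + r) - 1) * Real.exp (-u ^ (1/m))) := by
      intro u hu
      have hu0 : (0:ℝ) < u := hu
      have e1 : u ^ (r + 1/m - 1) * u ^ q = u ^ ((q + r + 1/m) - 1) := by
        rw [← Real.rpow_add hu0]; ring_nf
      have e2 : u ^ (r - 1) * u ^ q = u ^ ((q + r) - 1) := by
        rw [← Real.rpow_add hu0]; ring_nf
      rw [← e1, ← e2]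
      unfold wA
      ring
    rw [setIntegral_congr_fun measurableSet_Ioi hcong]
    rw [integral_sub ((int_aux hm (by linarith : (-1:ℝ) < (q + r + 1/m) - 1)).const_mul (1/m))
      ((int_aux hm (by linarith : (-1:ℝ) < (q + r) - 1)).const_mul r)]
    rw [integral_const_mul, integral_const_mul, gamma_int hm (by linarith : (0:ℝ) < q + r + 1/m),
      gamma_int hm hqr]
    rw [show m * (q + r + 1/m) = m * (q + r) + 1 by rw [mul_add, mul_one_div_cancel (ne_of_gt hm)],
      Real.Gamma_add_one (ne_of_gt (by positivity : (0:ℝ) < m * (q + r)))]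
    field_simp
    ring
  have step4 : ∫ u in Set.Ioi (0:ℝ), wA m r u * (u ^ q * c₀)
      = m * q * Real.Gamma (m * (q + r)) * c₀ := by
    rw [← hJ, ← integral_mul_const]
    refine setIntegral_congr_fun measurableSet_Ioi (fun u _ => ?_)
    ring
  rw [step1, step2, step3, step4, hc0]
  ring


/-- Lemma 2.1 of the paper: for a nonnegative `d`-homogeneous polynomial `g` with `x^α`
integrable on `G₁(g)`,
`∫ x^α g(x)^r exp(-g(x)^{1/m}) dx = ((n+k)/d)·m·Γ(m((n+k)/d+r))·∫_{G₁(g)} x^α dx`;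
in particular `∫ g·exp(-g) dx = (n/d)·Γ(n/d+1)·|G₁(g)|` whenever `|G₁(g)| < ∞`. -/
theorem stmt_3 (n k d : ℕ) (hn : 1 ≤ n) (hd2 : 2 ≤ d) (hd : Even d)
    (r m : ℝ) (hm : 0 < m) (hpos : ((n : ℝ) + k) / d + r > 0)
    (α : Fin n →₀ ℕ) (hα : (∑ i, α i) = k)
    (g : MvPolynomial (Fin n) ℝ) (hg : g.IsHomogeneous d)
    (hg_nonneg : ∀ x, 0 ≤ MvPolynomial.eval x g)
    (hint : IntegrableOn (fun x : Fin n → ℝ => ∏ i, x i ^ α i) (G1 g)) :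
    ((∫ x, (∏ i, x i ^ α i) * MvPolynomial.eval x g ^ r *
        Real.exp (-(MvPolynomial.eval x g ^ (1 / m)))) =
      ((n : ℝ) + k) / d * m * Real.Gamma (m * (((n : ℝ) + k) / d + r)) *
        ∫ x in G1 g, ∏ i, x i ^ α i) ∧
    ∀ g' : MvPolynomial (Fin n) ℝ, g'.IsHomogeneous d →
      (∀ x, 0 ≤ MvPolynomial.eval x g') → volume (G1 g') < ⊤ →
      (∫ x, MvPolynomial.eval x g' * Real.exp (-(MvPolynomial.eval x g'))) =
        (n : ℝ) / d * Real.Gamma ((n : ℝ) / d + 1) * (volume (G1 g')).toReal := by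
  refine ⟨key n k d hn hd2 r m hm hpos α hα g hg hg_nonneg hint, ?_⟩
  intro g' hg' hg'0 hvol
  have h0 : (∑ i : Fin n, (0 : Fin n →₀ ℕ) i) = 0 := by simp
  have hpos' : ((n : ℝ) + (0:ℕ)) / d + (1:ℝ) > 0 := by positivity
  have hint' : IntegrableOn (fun x : Fin n → ℝ => ∏ i, x i ^ (0 : Fin n →₀ ℕ) i) (G1 g') := by
    simp only [Finsupp.coe_zero, Pi.zero_apply, pow_zero, Finset.prod_const_one]
    exact integrableOn_const hvol.ne
  have hk := key n 0 d hn hd2 1 1 one_pos hpos' 0 h0 g' hg' hg'0 hint'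
  have hrw : (fun x : Fin n → ℝ => (∏ i, x i ^ (0 : Fin n →₀ ℕ) i) *
        MvPolynomial.eval x g' ^ (1:ℝ) *
        Real.exp (-(MvPolynomial.eval x g' ^ (1 / (1:ℝ)))))
      = fun x : Fin n → ℝ => MvPolynomial.eval x g' * Real.exp (-(MvPolynomial.eval x g')) := by
    funext x
    simp [Real.rpow_one]
  rw [hrw] at hk
  rw [hk]
  have hset : ∫ x in G1 g', ∏ i, x i ^ (0 : Fin n →₀ ℕ) i = (volume (G1 g')).toReal := by
    simp only [Finsupp.coe_zero, Pi.zero_apply, pow_zero, Finset.prod_const_one]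
    rw [setIntegral_const, smul_eq_mul, mul_one, measureReal_def]
  rw [hset]
  norm_num
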